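/- For any finite multiset Γ of input angles in [0, π) and any regular orientation system 𝒞(θ) = {θ + jπ/k mod π : j = 0,…,k−1} parameterized by offset θ ∈ [0, π/k), there exists an optimal offset θ* minimizing the total distortion dist(θ) = Σ_{γ∈Γ} min_{c∈𝒞(θ)} d(c,γ) such that some orientation in 𝒞(θ*) equals some angle γ ∈ Γ, where d denotes the distance between angles modulo π (i.e., d(a,b) = min(|a−b|, π−|a−b|)). -/

import Mathlib

/-- Angular distance modulo π. -/
noncomputable def angDist (a b : ℝ) : ℝ := ⨅ n : ℤ, |a - b - n * Real.pi|

/-- Total distortion of the regular `k`-orientation system with offset `θ`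
with respect to the multiset `Γ` of input angles. -/
noncomputable def distortion (Γ : Multiset ℝ) (k : ℕ) (hk : k ≠ 0) (θ : ℝ) : ℝ :=
  (Γ.map fun γ => (Finset.range k).inf' (Finset.nonempty_range_iff.mpr hk)
    fun j => angDist (θ + j * Real.pi / k) γ).sum

noncomputable def nd (L x : ℝ) : ℝ := |x - round (x / L) * L|

lemma round_nearest (y : ℝ) (n : ℤ) : |y - round y| ≤ |y - n| := by
  rcases eq_or_ne n (round y) with h | h
  · rw [h]
  · have h1 : (1:ℝ) ≤ |(n:ℝ) - (round y : ℤ)| := by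
      rw [← Int.cast_sub, ← Int.cast_abs]
      exact_mod_cast Int.one_le_abs (sub_ne_zero.mpr h)
    have h2 := abs_sub_round y
    have h3 : |(n:ℝ) - (round y : ℤ)| ≤ |y - round y| + |y - n| := by
      have : (n:ℝ) - (round y : ℤ) = (y - round y) - (y - n) := by ring
      rw [this]
      exact abs_sub _ _
    linarith

lemma nd_nonneg (L x : ℝ) : 0 ≤ nd L x := abs_nonneg _

lemma nd_le {L : ℝ} (hL : 0 < L) (x : ℝ) (n : ℤ) : nd L x ≤ |x - n * L| := by
  have hL' : L ≠ 0 := ne_of_gt hL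
  have e1 : x - round (x / L) * L = (x / L - round (x / L)) * L := by field_simp
  have e2 : x - n * L = (x / L - n) * L := by field_simp
  rw [nd, e1, e2, abs_mul, abs_mul, abs_of_pos hL]
  exact mul_le_mul_of_nonneg_right (round_nearest _ n) hL.le

lemma angDist_eq (a b : ℝ) : angDist a b = nd Real.pi (a - b) := by
  refine le_antisymm ?_ (le_ciInf fun n => nd_le Real.pi_pos _ n)
  exact ciInf_le ⟨0, by rintro y ⟨n, rfl⟩; exact abs_nonneg _⟩ (round ((a - b) / Real.pi))

lemma nd_period {L : ℝ} (hL : 0 < L) (x : ℝ) : nd L (x + L) = nd L x := by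
  unfold nd
  have h1 : (x + L) / L = x / L + 1 := by field_simp
  rw [h1, round_add_one]
  congr 1
  push_cast
  ring

lemma nd_eq_min {L : ℝ} (hL : 0 < L) {m : ℤ} {x : ℝ} (h1 : (m:ℝ) * L ≤ x)
    (h2 : x ≤ ((m:ℝ) + 1) * L) :
    nd L x = min (x - m * L) (((m:ℝ) + 1) * L - x) := by
  apply le_antisymm
  · refine le_min ?_ ?_
    · have h := nd_le hL x m
      rwa [abs_of_nonneg (by linarith)] at h
    · have h := nd_le hL x (m+1)
      push_cast at h
      rwa [abs_of_nonpos (by linarith), neg_sub] at h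
  · have hrfl : nd L x = |x - round (x / L) * L| := rfl
    rw [hrfl]
    set n := round (x / L) with hn
    rcases le_or_gt n m with h | h
    · have hnm : (n:ℝ) ≤ m := by exact_mod_cast h
      refine le_trans (min_le_left _ _) (le_trans ?_ (le_abs_self _))
      nlinarith
    · have hnm : (m:ℝ) + 1 ≤ n := by exact_mod_cast h
      have habs : (n:ℝ) * L - x ≤ |x - n * L| := by
        rw [abs_sub_comm]; exact le_abs_self _
      refine le_trans (min_le_right _ _) (le_trans ?_ habs)
      nlinarith


lemma inf'_angDist {k : ℕ} (hk : k ≠ 0) (θ γ : ℝ) :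
    (Finset.range k).inf' (Finset.nonempty_range_iff.mpr hk)
      (fun j => angDist (θ + j * Real.pi / k) γ) = nd (Real.pi / k) (θ - γ) := by
  have hk0 : (0:ℝ) < k := by exact_mod_cast Nat.pos_of_ne_zero hk
  have hkR : (k:ℝ) ≠ 0 := ne_of_gt hk0
  set L := Real.pi / k with hLdef
  have hL : 0 < L := div_pos Real.pi_pos hk0
  have hπ : Real.pi = k * L := by rw [hLdef]; field_simp
  apply le_antisymm
  · set m₀ : ℤ := round ((θ - γ) / L) with hm₀
    set r : ℤ := (-m₀) % k with hr
    set q : ℤ := (-m₀) / k with hq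
    have hkZ : (0:ℤ) < (k:ℤ) := by exact_mod_cast Nat.pos_of_ne_zero hk
    have hr0 : 0 ≤ r := Int.emod_nonneg _ (ne_of_gt hkZ)
    have hrk : r < k := Int.emod_lt_of_pos _ hkZ
    have hmem : r.toNat ∈ Finset.range k := by rw [Finset.mem_range]; omega
    refine le_trans (Finset.inf'_le _ hmem) ?_
    have hb : BddBelow (Set.range fun n : ℤ => |θ + (r.toNat : ℝ) * Real.pi / k - γ - n * Real.pi|) :=
      ⟨0, by rintro y ⟨n, rfl⟩; exact abs_nonneg _⟩
    refine le_trans (ciInf_le hb (-q)) ?_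
    have hqr : (k:ℤ) * q + r = -m₀ := Int.mul_ediv_add_emod _ _
    have hqrR : (k:ℝ) * q + r = -(m₀:ℝ) := by exact_mod_cast hqr
    have hcast : ((r.toNat : ℕ) : ℝ) = (r : ℝ) := by exact_mod_cast Int.toNat_of_nonneg hr0
    have key : θ + (r.toNat : ℝ) * Real.pi / k - γ - ((-q : ℤ) : ℝ) * Real.pi = θ - γ - m₀ * L := by
      rw [hcast]
      push_cast
      rw [hπ]
      rw [mul_div_assoc, mul_div_cancel_left₀ _ hkR]
      linear_combination L * hqrR
    rw [key]
    exact le_of_eq rfl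
  · refine Finset.le_inf' _ _ fun j hj => ?_
    refine le_ciInf fun n => ?_
    have key : θ + (j:ℝ) * Real.pi / k - γ - (n:ℝ) * Real.pi = (θ - γ) - ((n * k - j : ℤ) : ℝ) * L := by
      push_cast
      rw [hπ]
      field_simp
      ring
    rw [key]
    exact nd_le hL _ _

lemma distortion_eq (Γ : Multiset ℝ) {k : ℕ} (hk : k ≠ 0) (θ : ℝ) :
    distortion Γ k hk θ = (Γ.map fun γ => nd (Real.pi / k) (θ - γ)).sum := by
  unfold distortion
  congr 1
  exact Multiset.map_congr rfl fun γ _ => inf'_angDist hk θ γ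

lemma nd_combo {L : ℝ} (hL : 0 < L) {A B : ℝ} (hAB : A ≤ B)
    (hno : ∀ m : ℤ, (m:ℝ) * L ≤ A ∨ B ≤ (m:ℝ) * L) {t : ℝ} (ht0 : 0 ≤ t) (ht1 : t ≤ 1) :
    (1 - t) * nd L A + t * nd L B ≤ nd L ((1 - t) * A + t * B) := by
  obtain ⟨m, hmA, hmB⟩ : ∃ m : ℤ, (m:ℝ) * L ≤ A ∧ B ≤ ((m:ℝ) + 1) * L := by
    refine ⟨⌊A / L⌋, ?_, ?_⟩
    · have h := Int.floor_le (A / L)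
      have := mul_le_mul_of_nonneg_right h hL.le
      rwa [div_mul_cancel₀ _ (ne_of_gt hL)] at this
    · rcases hno (⌊A / L⌋ + 1) with h | h
      · exfalso
        have h2 := Int.lt_floor_add_one (A / L)
        have h3 := mul_lt_mul_of_pos_right h2 hL
        rw [div_mul_cancel₀ _ (ne_of_gt hL)] at h3
        push_cast at h h3
        linarith
      · push_cast at h
        linarith
  set x := (1 - t) * A + t * B with hx
  have hxA : A ≤ x := by nlinarith
  have hxB : x ≤ B := by nlinarith
  rw [nd_eq_min hL hmA (le_trans hAB hmB), nd_eq_min hL (le_trans hmA hAB) hmB,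
      nd_eq_min hL (le_trans hmA hxA) (le_trans hxB hmB)]
  refine le_min ?_ ?_
  · have c1 : (1 - t) * min (A - m * L) (((m:ℝ) + 1) * L - A) ≤ (1 - t) * (A - m * L) :=
      mul_le_mul_of_nonneg_left (min_le_left _ _) (by linarith)
    have c2 : t * min (B - m * L) (((m:ℝ) + 1) * L - B) ≤ t * (B - m * L) :=
      mul_le_mul_of_nonneg_left (min_le_left _ _) ht0
    have : x - (m:ℝ) * L = (1 - t) * (A - m * L) + t * (B - m * L) := by rw [hx]; ring
    linarith
  · have c1 : (1 - t) * min (A - m * L) (((m:ℝ) + 1) * L - A) ≤ (1 - t) * (((m:ℝ) + 1) * L - A) :=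
      mul_le_mul_of_nonneg_left (min_le_right _ _) (by linarith)
    have c2 : t * min (B - m * L) (((m:ℝ) + 1) * L - B) ≤ t * (((m:ℝ) + 1) * L - B) :=
      mul_le_mul_of_nonneg_left (min_le_right _ _) ht0
    have : ((m:ℝ) + 1) * L - x = (1 - t) * (((m:ℝ)+1)*L - A) + t * (((m:ℝ)+1)*L - B) := by rw [hx]; ring
    linarith

section Main

lemma mulL_lt {L : ℝ} (hL : 0 < L) {m n : ℤ} (h : (m:ℝ) * L < (n:ℝ) * L) : m < n := by
  have : (m:ℝ) < n := lt_of_mul_lt_mul_right h hL.le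
  exact_mod_cast this

theorem exists_optimal_offset_through_input_angle
    (Γ : Multiset ℝ) (hΓ : Γ ≠ 0) (hmem : ∀ γ ∈ Γ, γ ∈ Set.Ico 0 Real.pi)
    (k : ℕ) (hk : 2 ≤ k) :
    ∃ θstar ∈ Set.Ico (0 : ℝ) (Real.pi / k),
      (∀ θ ∈ Set.Ico (0 : ℝ) (Real.pi / k),
        distortion Γ k (by omega) θstar ≤ distortion Γ k (by omega) θ) ∧
      ∃ j < k, ∃ γ ∈ Γ, ∃ n : ℤ, θstar + j * Real.pi / k = γ + n * Real.pi := by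
  have hkne : k ≠ 0 := by omega
  have hk0 : (0:ℝ) < k := by exact_mod_cast Nat.pos_of_ne_zero hkne
  have hkR : (k:ℝ) ≠ 0 := ne_of_gt hk0
  set L := Real.pi / (k:ℝ) with hLdef
  have hL : 0 < L := div_pos Real.pi_pos hk0
  set cand : ℝ → ℝ := fun γ => Int.fract (γ / L) * L with hcanddef
  have hcand_mem : ∀ γ, 0 ≤ cand γ ∧ cand γ < L := by
    intro γ
    constructor
    · exact mul_nonneg (Int.fract_nonneg _) hL.le
    · have h1 := Int.fract_lt_one (γ / L)
      have h2 := Int.fract_nonneg (γ / L)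
      simp only [hcanddef]
      nlinarith
  have hcand_eq : ∀ γ : ℝ, γ = cand γ + (⌊γ / L⌋ : ℝ) * L := by
    intro γ
    simp only [hcanddef, Int.fract]
    field_simp
    ring
  set S : Finset ℝ := Γ.toFinset.image cand with hSdef
  have hSne : S.Nonempty := (Multiset.toFinset_nonempty.mpr hΓ).image _
  have hSmem : ∀ c ∈ S, 0 ≤ c ∧ c < L := by
    intro c hc
    obtain ⟨γ, _, rfl⟩ := Finset.mem_image.mp hc
    exact hcand_mem γ
  set D : ℝ → ℝ := fun θ => (Γ.map fun γ => nd L (θ - γ)).sum with hDdef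
  have hDd : ∀ (h : k ≠ 0) (θ : ℝ), distortion Γ k h θ = D θ := by
    intro h θ
    rw [distortion_eq Γ h θ, hDdef, hLdef]
  have hDper : ∀ c : ℝ, D (c - L) = D c := by
    intro c
    simp only [hDdef]
    refine congrArg Multiset.sum (Multiset.map_congr rfl fun γ _ => ?_)
    have h := nd_period hL (c - L - γ)
    have e : c - L - γ + L = c - γ := by ring
    rw [e] at h
    exact h.symm
  have hDper' : ∀ c : ℝ, D (c + L) = D c := by
    intro c
    simp only [hDdef]
    refine congrArg Multiset.sum (Multiset.map_congr rfl fun γ _ => ?_)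
    have h := nd_period hL (c - γ)
    have e : c - γ + L = c + L - γ := by ring
    rw [e] at h
    exact h
  obtain ⟨θs, hθsS, hθsmin⟩ := Finset.exists_min_image S D hSne
  obtain ⟨γ₀, hγ₀, hθseq⟩ := Finset.mem_image.mp hθsS
  have hγ₀Γ : γ₀ ∈ Γ := Multiset.mem_toFinset.mp hγ₀
  refine ⟨θs, Set.mem_Ico.mpr ⟨(hSmem θs hθsS).1, (hSmem θs hθsS).2⟩, ?_, ?_⟩
  · -- optimality
    intro θ hθ
    obtain ⟨hθ0, hθL⟩ := Set.mem_Ico.mp hθ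
    rw [hDd, hDd]
    -- construct a
    have ha : ∃ a, a ≤ θ ∧ θ - L < a ∧ (∃ ca ∈ S, D a = D ca) ∧
        (∀ c ∈ S, ∀ m : ℤ, ¬(a < c + (m:ℝ) * L ∧ c + (m:ℝ) * L ≤ θ)) := by
      by_cases hcase : (S.filter (fun c => c ≤ θ)).Nonempty
      · set a := (S.filter (fun c => c ≤ θ)).max' hcase with hadef
        have haS : a ∈ S.filter (fun c => c ≤ θ) := Finset.max'_mem _ hcase
        obtain ⟨haS', haθ⟩ := Finset.mem_filter.mp haS
        refine ⟨a, haθ, ?_, ⟨a, haS', rfl⟩, ?_⟩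
        · have := (hSmem a haS').1; linarith
        · rintro c hc m ⟨h1, h2⟩
          have hc0 := (hSmem c hc).1
          have hcL := (hSmem c hc).2
          have ha0 := (hSmem a haS').1
          have hm0 : m = 0 := by
            have h5 : (m:ℝ) * L < (1:ℤ) * L := by push_cast; nlinarith
            have h6 : ((-1:ℤ):ℝ) * L < (m:ℝ) * L := by push_cast; nlinarith
            have := mulL_lt hL h5
            have := mulL_lt hL h6
            omega
          subst hm0
          push_cast at h1 h2
          have hca : c ≤ a := Finset.le_max' _ _ (Finset.mem_filter.mpr ⟨hc, by linarith⟩)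
          linarith
      · have hall : ∀ c ∈ S, θ < c := by
          intro c hc
          by_contra h
          push_neg at h
          exact hcase ⟨c, Finset.mem_filter.mpr ⟨hc, h⟩⟩
        set cm := S.max' hSne with hcm
        have hcmS := S.max'_mem hSne
        refine ⟨cm - L, ?_, ?_, ⟨cm, hcmS, hDper cm⟩, ?_⟩
        · have := (hSmem cm hcmS).2; linarith
        · have := hall cm hcmS; linarith
        · rintro c hc m ⟨h1, h2⟩
          have hc0 := (hSmem c hc).1
          have hcL := (hSmem c hc).2
          have hcm0 := (hSmem cm hcmS).1
          have hcθ := hall c hc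
          have hm : m = -1 := by
            have h5 : (m:ℝ) * L < (0:ℤ) * L := by push_cast; nlinarith
            have h6 : ((-2:ℤ):ℝ) * L < (m:ℝ) * L := by push_cast; nlinarith
            have := mulL_lt hL h5
            have := mulL_lt hL h6
            omega
          subst hm
          push_cast at h1 h2
          have hcc : c ≤ cm := Finset.le_max' S c hc
          linarith
    -- construct b
    have hb : ∃ b, θ ≤ b ∧ b < θ + L ∧ (∃ cb ∈ S, D b = D cb) ∧
        (∀ c ∈ S, ∀ m : ℤ, ¬(θ < c + (m:ℝ) * L ∧ c + (m:ℝ) * L < b)) := by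
      by_cases hcase : (S.filter (fun c => θ ≤ c)).Nonempty
      · set b := (S.filter (fun c => θ ≤ c)).min' hcase with hbdef
        have hbS : b ∈ S.filter (fun c => θ ≤ c) := Finset.min'_mem _ hcase
        obtain ⟨hbS', hbθ⟩ := Finset.mem_filter.mp hbS
        refine ⟨b, hbθ, ?_, ⟨b, hbS', rfl⟩, ?_⟩
        · have := (hSmem b hbS').2; linarith
        · rintro c hc m ⟨h1, h2⟩
          have hc0 := (hSmem c hc).1
          have hcL := (hSmem c hc).2
          have hbL := (hSmem b hbS').2
          have hm0 : m = 0 := by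
            have h5 : (m:ℝ) * L < (1:ℤ) * L := by push_cast; nlinarith
            have h6 : ((-1:ℤ):ℝ) * L < (m:ℝ) * L := by push_cast; nlinarith
            have := mulL_lt hL h5
            have := mulL_lt hL h6
            omega
          subst hm0
          push_cast at h1 h2
          have hbc : b ≤ c := Finset.min'_le _ _ (Finset.mem_filter.mpr ⟨hc, by linarith⟩)
          linarith
      · have hall : ∀ c ∈ S, c < θ := by
          intro c hc
          by_contra h
          push_neg at h
          exact hcase ⟨c, Finset.mem_filter.mpr ⟨hc, h⟩⟩
        set cn := S.min' hSne with hcn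
        have hcnS := S.min'_mem hSne
        refine ⟨cn + L, ?_, ?_, ⟨cn, hcnS, hDper' cn⟩, ?_⟩
        · have := (hSmem cn hcnS).1; linarith
        · have := hall cn hcnS; linarith
        · rintro c hc m ⟨h1, h2⟩
          have hc0 := (hSmem c hc).1
          have hcL := (hSmem c hc).2
          have hcn0 := (hSmem cn hcnS).1
          have hcnL := (hSmem cn hcnS).2
          have hcθ := hall c hc
          have hm : m = 1 := by
            have h5 : (m:ℝ) * L < (2:ℤ) * L := by push_cast; nlinarith
            have h6 : ((0:ℤ):ℝ) * L < (m:ℝ) * L := by push_cast; nlinarith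
            have := mulL_lt hL h5
            have := mulL_lt hL h6
            omega
          subst hm
          push_cast at h1 h2
          have hcc : cn ≤ c := Finset.min'_le S c hc
          linarith
    obtain ⟨a, haθ, haθL, ⟨ca, hcaS, hDa⟩, hAno⟩ := ha
    obtain ⟨b, hθb, hθbL, ⟨cb, hcbS, hDb⟩, hBno⟩ := hb
    have hDθsa : D θs ≤ D a := hDa ▸ hθsmin ca hcaS
    have hDθsb : D θs ≤ D b := hDb ▸ hθsmin cb hcbS
    have hnone : ∀ γ ∈ Γ, ∀ m : ℤ, (m:ℝ) * L ≤ a - γ ∨ b - γ ≤ (m:ℝ) * L := by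
      intro γ hγ m
      by_contra h
      push_neg at h
      obtain ⟨h1, h2⟩ := h
      have hcS : cand γ ∈ S := Finset.mem_image_of_mem cand (Multiset.mem_toFinset.mpr hγ)
      have hp : γ + (m:ℝ) * L = cand γ + ((m + ⌊γ / L⌋ : ℤ) : ℝ) * L := by
        nth_rewrite 1 [hcand_eq γ]
        push_cast
        ring
      rcases le_or_gt (γ + (m:ℝ) * L) θ with hle | hgt
      · exact hAno (cand γ) hcS (m + ⌊γ / L⌋) ⟨by rw [← hp]; linarith, by rw [← hp]; exact hle⟩
      · exact hBno (cand γ) hcS (m + ⌊γ / L⌋) ⟨by rw [← hp]; exact hgt, by rw [← hp]; linarith⟩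
    rcases eq_or_lt_of_le (le_trans haθ hθb) with hab | hab
    · have hθa : θ = a := le_antisymm (hab ▸ hθb) haθ
      rw [hθa]
      exact hDθsa
    · set t := (θ - a) / (b - a) with htdef
      have hba : b - a ≠ 0 := by linarith
      have ht0 : 0 ≤ t := div_nonneg (by linarith) (by linarith)
      have ht1 : t ≤ 1 := (div_le_one (by linarith)).mpr (by linarith)
      have hθeq : θ = (1 - t) * a + t * b := by
        rw [htdef]
        field_simp
        ring
      have key : ∀ γ ∈ Γ, (1 - t) * nd L (a - γ) + t * nd L (b - γ) ≤ nd L (θ - γ) := by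
        intro γ hγ
        have e : θ - γ = (1 - t) * (a - γ) + t * (b - γ) := by rw [hθeq]; ring
        rw [e]
        exact nd_combo hL (by linarith) (hnone γ hγ) ht0 ht1
      have hsum1 : (Γ.map fun γ => (1 - t) * nd L (a - γ) + t * nd L (b - γ)).sum ≤ D θ := by
        simp only [hDdef]
        exact Multiset.sum_map_le_sum_map _ _ key
      have hsplit : (Γ.map fun γ => (1 - t) * nd L (a - γ) + t * nd L (b - γ)).sum
          = (1 - t) * D a + t * D b := by
        simp only [hDdef]
        rw [Multiset.sum_map_add, Multiset.sum_map_mul_left, Multiset.sum_map_mul_left]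
      have hcomb : D θs ≤ (1 - t) * D a + t * D b := by
        have c1 : (1 - t) * D θs ≤ (1 - t) * D a :=
          mul_le_mul_of_nonneg_left hDθsa (by linarith)
        have c2 : t * D θs ≤ t * D b := mul_le_mul_of_nonneg_left hDθsb ht0
        nlinarith
      linarith [hsplit ▸ hsum1]
  · -- the witness
    set F : ℤ := ⌊γ₀ / L⌋ with hF
    have hkZ : (0:ℤ) < (k:ℤ) := by exact_mod_cast Nat.pos_of_ne_zero hkne
    have hr0 : 0 ≤ F % k := Int.emod_nonneg _ (ne_of_gt hkZ)
    have hrk : F % k < k := Int.emod_lt_of_pos _ hkZ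
    refine ⟨(F % k).toNat, by omega, γ₀, hγ₀Γ, -(F / k), ?_⟩
    have hE : (k:ℤ) * (F / k) + F % k = F := Int.mul_ediv_add_emod _ _
    have hER : (k:ℝ) * ((F / k : ℤ) : ℝ) + ((F % k : ℤ) : ℝ) = (F:ℝ) := by exact_mod_cast hE
    have hθsv : θs = γ₀ - (F:ℝ) * L := by
      rw [← hθseq]
      nth_rewrite 2 [hcand_eq γ₀]
      ring
    have hcast : (((F % k).toNat : ℕ) : ℝ) = ((F % k : ℤ) : ℝ) := by
      exact_mod_cast Int.toNat_of_nonneg hr0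
    rw [hθsv, hcast]
    rw [hLdef]
    push_cast
    field_simp
    linear_combination (Real.pi) * hER

end Main
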